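/- Let q be a non-increasing probability vector of dimension d with ½‖q − e₁‖₁ > ε for some ε ∈ [0,1], and let k_ε be the index with Σ_{x=1}^{k_ε} q_x ≤ 1−ε and Σ_{x=1}^{k_ε+1} q_x > 1−ε. Define q̄^(ε) by q̄₁ = q₁+ε, q̄_x = q_x for 2 ≤ x ≤ k_ε, q̄_{k_ε+1} = 1−ε−Σ_{x=1}^{k_ε} q_x, and 0 otherwise. Then q̄^(ε) is a probability vector satisfying ½‖q − q̄^(ε)‖₁ ≤ ε, and q̄^(ε) majorizes every probability vector q' with ½‖q − q'‖₁ ≤ ε. -/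

import Mathlib

lemma sum_subset_le_sum_range_aux (d : ℕ) (q : ℕ → ℝ)
    (hq0 : ∀ x, 0 ≤ q x)
    (hqmono : ∀ i j, i ≤ j → j < d → q j ≤ q i)
    (S : Finset ℕ) (hS : S ⊆ Finset.range d) :
    ∑ x ∈ S, q x ≤ ∑ x ∈ Finset.range S.card, q x := by
  classical
  set m := S.card with hm
  have hmd : m ≤ d := by
    have := Finset.card_le_card hS
    simpa using this
  have key : ∑ x ∈ S \ Finset.range m, q x ≤ ∑ x ∈ Finset.range m \ S, q x := by
    rcases Finset.eq_empty_or_nonempty (S \ Finset.range m) with he | hne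
    · rw [he]
      simpa using Finset.sum_nonneg fun x _ => hq0 x
    · have hm1 : 1 ≤ m := by
        obtain ⟨x, hx⟩ := hne
        exact Finset.card_pos.mpr ⟨x, (Finset.mem_sdiff.mp hx).1⟩
      have hcard : (S \ Finset.range m).card = (Finset.range m \ S).card := by
        have h1 := Finset.card_sdiff_add_card_inter S (Finset.range m)
        have h2 := Finset.card_sdiff_add_card_inter (Finset.range m) S
        rw [Finset.inter_comm] at h2
        simp only [Finset.card_range] at h2
        omega
      calc ∑ x ∈ S \ Finset.range m, q x
          ≤ ∑ _x ∈ S \ Finset.range m, q (m-1) := by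
            refine Finset.sum_le_sum fun x hx => ?_
            obtain ⟨hxS, hxR⟩ := Finset.mem_sdiff.mp hx
            have hxd : x < d := Finset.mem_range.mp (hS hxS)
            have hxm : m ≤ x := by simpa using hxR
            exact hqmono (m-1) x (by omega) hxd
        _ = ((S \ Finset.range m).card : ℝ) * q (m-1) := by
            rw [Finset.sum_const, nsmul_eq_mul]
        _ = ((Finset.range m \ S).card : ℝ) * q (m-1) := by rw [hcard]
        _ = ∑ _x ∈ Finset.range m \ S, q (m-1) := by
            rw [Finset.sum_const, nsmul_eq_mul]
        _ ≤ ∑ x ∈ Finset.range m \ S, q x := by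
            refine Finset.sum_le_sum fun x hx => ?_
            have hxm : x < m := Finset.mem_range.mp (Finset.mem_sdiff.mp hx).1
            exact hqmono x (m-1) (by omega) (by omega)
  have e1 : ∑ x ∈ S, q x = ∑ x ∈ S ∩ Finset.range m, q x + ∑ x ∈ S \ Finset.range m, q x :=
    (Finset.sum_inter_add_sum_sdiff S (Finset.range m) q).symm
  have e2 : ∑ x ∈ Finset.range m, q x
      = ∑ x ∈ S ∩ Finset.range m, q x + ∑ x ∈ Finset.range m \ S, q x := by
    rw [← Finset.sum_inter_add_sum_sdiff (Finset.range m) S q, Finset.inter_comm]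
  rw [e1, e2]
  linarith

lemma max_half_aux (a : ℝ) : max a 0 = (a + |a|) / 2 := by
  rcases le_total a 0 with h | h
  · rw [max_eq_right h, abs_of_nonpos h]; ring
  · rw [max_eq_left h, abs_of_nonneg h]; ring

theorem steepest_eps_approximation (d : ℕ) (hd : 1 ≤ d) (q : ℕ → ℝ)
    (hq0 : ∀ x, 0 ≤ q x) (hq1 : ∑ x ∈ Finset.range d, q x = 1)
    (hqmono : ∀ i j, i ≤ j → j < d → q j ≤ q i)
    (ε : ℝ) (hε0 : 0 ≤ ε) (hε1 : ε ≤ 1)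
    (hfar : (∑ x ∈ Finset.range d, |q x - if x = 0 then 1 else 0|) / 2 > ε)
    (kε : ℕ) (hkd : kε < d)
    (hk1 : ∑ x ∈ Finset.range kε, q x ≤ 1 - ε)
    (hk2 : 1 - ε < ∑ x ∈ Finset.range (kε + 1), q x) :
    let qbar : ℕ → ℝ := fun x =>
      if x = 0 then q 0 + ε
      else if x < kε then q x
      else if x = kε then 1 - ε - ∑ y ∈ Finset.range kε, q y
      else 0
    (∀ x, 0 ≤ qbar x) ∧ (∑ x ∈ Finset.range d, qbar x = 1) ∧
    (∑ x ∈ Finset.range d, |q x - qbar x|) / 2 ≤ ε ∧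
    ∀ q' : ℕ → ℝ, (∀ x, 0 ≤ q' x) → (∑ x ∈ Finset.range d, q' x = 1) →
      (∑ x ∈ Finset.range d, |q x - q' x|) / 2 ≤ ε →
      ∀ S ⊆ Finset.range d, ∑ x ∈ S, q' x ≤ ∑ x ∈ Finset.range S.card, qbar x := by
  intro qbar
  have hqbdef : ∀ x, qbar x = if x = 0 then q 0 + ε
      else if x < kε then q x
      else if x = kε then 1 - ε - ∑ y ∈ Finset.range kε, q y
      else 0 := fun x => rfl
  have hsplit : ∀ (f : ℕ → ℝ) (n N : ℕ), n ≤ N →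
      ∑ x ∈ Finset.range N, f x = ∑ x ∈ Finset.range n, f x + ∑ x ∈ Finset.Ico n N, f x := by
    intro f n N hn
    rw [Finset.range_eq_Ico, Finset.range_eq_Ico]
    exact (Finset.sum_Ico_consecutive f (Nat.zero_le n) hn).symm
  have hq0le1 : q 0 ≤ 1 := by
    rw [← hq1]
    exact Finset.single_le_sum (fun i _ => hq0 i) (Finset.mem_range.mpr hd)
  -- kε ≥ 1
  have hkpos : 1 ≤ kε := by
    by_contra h
    have hk0 : kε = 0 := by omega
    subst hk0
    have hIco : ∑ x ∈ Finset.Ico 1 d, q x = 1 - q 0 := by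
      have := hsplit q 1 d hd
      rw [Finset.sum_range_one] at this
      linarith
    have hsum : ∑ x ∈ Finset.range d, |q x - if x = 0 then 1 else 0| = 2 * (1 - q 0) := by
      rw [hsplit _ 1 d hd, Finset.sum_range_one]
      have h1 : |q 0 - if (0:ℕ) = 0 then (1:ℝ) else 0| = 1 - q 0 := by
        rw [if_pos rfl, abs_of_nonpos (by linarith)]
        ring
      have h2 : ∑ x ∈ Finset.Ico 1 d, |q x - if x = 0 then (1:ℝ) else 0|
          = ∑ x ∈ Finset.Ico 1 d, q x := by
        refine Finset.sum_congr rfl fun x hx => ?_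
        have hx1 : 1 ≤ x := (Finset.mem_Ico.mp hx).1
        rw [if_neg (by omega), sub_zero, abs_of_nonneg (hq0 x)]
      rw [h1, h2, hIco]
      ring
    rw [Finset.sum_range_one] at hk2
    rw [hsum] at hfar
    linarith
  -- basic values of qbar
  have hqb0 : qbar 0 = q 0 + ε := by rw [hqbdef]; simp
  have hqbmid : ∀ x, 1 ≤ x → x < kε → qbar x = q x := by
    intro x h1 h2
    rw [hqbdef, if_neg (by omega), if_pos h2]
  have hqbk : qbar kε = 1 - ε - ∑ y ∈ Finset.range kε, q y := by
    rw [hqbdef, if_neg (by omega), if_neg (by omega), if_pos rfl]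
  have hqbhi : ∀ x, kε < x → qbar x = 0 := by
    intro x hx
    rw [hqbdef, if_neg (by omega), if_neg (by omega), if_neg (by omega)]
  -- partial sums of qbar
  have L1 : ∀ m, 1 ≤ m → m ≤ kε →
      ∑ x ∈ Finset.range m, qbar x = ε + ∑ x ∈ Finset.range m, q x := by
    intro m h1 h2
    have e1 := hsplit qbar 1 m h1
    have e2 := hsplit q 1 m h1
    rw [Finset.sum_range_one] at e1 e2
    have e3 : ∑ x ∈ Finset.Ico 1 m, qbar x = ∑ x ∈ Finset.Ico 1 m, q x := by
      refine Finset.sum_congr rfl fun x hx => ?_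
      obtain ⟨ha, hb⟩ := Finset.mem_Ico.mp hx
      exact hqbmid x ha (by omega)
    rw [e1, e2, e3, hqb0]
    ring
  have L2 : ∑ x ∈ Finset.range (kε + 1), qbar x = 1 := by
    rw [Finset.sum_range_succ, L1 kε hkpos le_rfl, hqbk]
    ring
  have L3 : ∀ m, kε + 1 ≤ m → ∑ x ∈ Finset.range m, qbar x = 1 := by
    intro m hm
    rw [hsplit qbar (kε+1) m hm, L2]
    have : ∑ x ∈ Finset.Ico (kε+1) m, qbar x = 0 :=
      Finset.sum_eq_zero fun x hx => hqbhi x (by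
        have := (Finset.mem_Ico.mp hx).1; omega)
    rw [this]
    ring
  -- nonnegativity
  have hqbnn : ∀ x, 0 ≤ qbar x := by
    intro x
    rw [hqbdef]
    split_ifs with h1 h2 h3
    · linarith [hq0 0]
    · exact hq0 x
    · linarith
    · exact le_refl 0
  refine ⟨hqbnn, L3 d (by omega), ?_, ?_⟩
  · -- distance bound
    set T := ∑ x ∈ Finset.range (kε + 1), q x with hT
    have hTle : T ≤ 1 := by
      rw [← hq1, hsplit q (kε+1) d (by omega)]
      have : 0 ≤ ∑ x ∈ Finset.Ico (kε+1) d, q x := Finset.sum_nonneg fun x _ => hq0 x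
      linarith
    have hhi : ∑ x ∈ Finset.Ico (kε+1) d, |q x - qbar x| = 1 - T := by
      have e : ∑ x ∈ Finset.Ico (kε+1) d, |q x - qbar x|
          = ∑ x ∈ Finset.Ico (kε+1) d, q x := by
        refine Finset.sum_congr rfl fun x hx => ?_
        rw [hqbhi x (by have := (Finset.mem_Ico.mp hx).1; omega), sub_zero,
          abs_of_nonneg (hq0 x)]
      rw [e]
      have := hsplit q (kε+1) d (by omega)
      rw [hq1] at this
      linarith
    have hlo : ∑ x ∈ Finset.range (kε + 1), |q x - qbar x| = ε + (T - (1 - ε)) := by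
      rw [Finset.sum_range_succ]
      have e1 := hsplit (fun x => |q x - qbar x|) 1 kε hkpos
      rw [Finset.sum_range_one] at e1
      have e2 : ∑ x ∈ Finset.Ico 1 kε, |q x - qbar x| = 0 :=
        Finset.sum_eq_zero fun x hx => by
          obtain ⟨ha, hb⟩ := Finset.mem_Ico.mp hx
          rw [hqbmid x ha hb, sub_self, abs_zero]
      have e3 : |q 0 - qbar 0| = ε := by
        rw [hqb0]
        rw [show q 0 - (q 0 + ε) = -ε by ring, abs_neg, abs_of_nonneg hε0]
      have e4 : |q kε - qbar kε| = T - (1 - ε) := by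
        rw [hqbk]
        have hTeq : T = ∑ y ∈ Finset.range kε, q y + q kε := by
          rw [hT, Finset.sum_range_succ]
        have hk2' : 1 - ε < ∑ y ∈ Finset.range kε, q y + q kε := by
          rw [← Finset.sum_range_succ]; exact hk2
        rw [abs_of_nonneg (by linarith)]
        linarith
      rw [e1, e2, e3, e4]
      ring
    rw [hsplit (fun x => |q x - qbar x|) (kε+1) d (by omega), hlo, hhi]
    linarith
  · -- majorization
    intro q' hq'0 hq'1 hclose S hS
    set m := S.card with hm
    have hmd : m ≤ d := by
      have := Finset.card_le_card hS
      simpa using this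
    by_cases hcase : m ≤ kε
    · rcases Nat.eq_zero_or_pos m with h0 | hpos
      · have hS0 : S = ∅ := Finset.card_eq_zero.mp h0
        rw [hS0]
        simp only [Finset.sum_empty]
        exact Finset.sum_nonneg fun x _ => hqbnn x
      · rw [L1 m hpos hcase]
        have h2 : ∑ x ∈ S, (q' x - q x) ≤ ε := by
          have step1 : ∑ x ∈ S, (q' x - q x) ≤ ∑ x ∈ S, max (q' x - q x) 0 :=
            Finset.sum_le_sum fun x _ => le_max_left _ _
          have step2 : ∑ x ∈ S, max (q' x - q x) 0
              ≤ ∑ x ∈ Finset.range d, max (q' x - q x) 0 :=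
            Finset.sum_le_sum_of_subset_of_nonneg hS fun i _ _ => le_max_right _ _
          have step3 : ∑ x ∈ Finset.range d, max (q' x - q x) 0
              = ((∑ x ∈ Finset.range d, (q' x - q x))
                + ∑ x ∈ Finset.range d, |q' x - q x|) / 2 := by
            rw [← Finset.sum_add_distrib, Finset.sum_div]
            exact Finset.sum_congr rfl fun x _ => max_half_aux _
          have step4 : ∑ x ∈ Finset.range d, (q' x - q x) = 0 := by
            rw [Finset.sum_sub_distrib, hq1, hq'1]
            ring
          have step5 : ∑ x ∈ Finset.range d, |q' x - q x|
              = ∑ x ∈ Finset.range d, |q x - q' x| :=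
            Finset.sum_congr rfl fun x _ => abs_sub_comm _ _
          calc ∑ x ∈ S, (q' x - q x) ≤ _ := step1
            _ ≤ _ := step2
            _ = _ := step3
            _ ≤ ε := by rw [step4, step5]; linarith
        have h3 : ∑ x ∈ S, q x ≤ ∑ x ∈ Finset.range m, q x :=
          sum_subset_le_sum_range_aux d q hq0 hqmono S hS
        have h4 : ∑ x ∈ S, q' x = ∑ x ∈ S, q x + ∑ x ∈ S, (q' x - q x) := by
          rw [← Finset.sum_add_distrib]
          exact Finset.sum_congr rfl fun x _ => by ring
        linarith
    · rw [L3 m (by omega)]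
      calc ∑ x ∈ S, q' x ≤ ∑ x ∈ Finset.range d, q' x :=
            Finset.sum_le_sum_of_subset_of_nonneg hS fun i _ _ => hq'0 i
        _ = 1 := hq'1
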